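/- Let ρ : ℝ³ → ℝ be a nonnegative C¹ function with compact support and let 0 < α < 3. Then for every x ∈ ℝ³, x · ∇((|·|^{-α} * ρ))(x) = (|·|^{-α} * (y ↦ y · ∇ρ(y)))(x) + (3 - α)(|·|^{-α} * ρ)(x). -/

import Mathlib

open MeasureTheory Real
open scoped RealInnerProductSpace

noncomputable section

open Set Metric Filter
open scoped Convolution

abbrev V3 := EuclideanSpace ℝ (Fin 3)

lemma locInt_rpow {α : ℝ} (hα0 : 0 < α) (hα3 : α < 3) :
    LocallyIntegrable (fun y : V3 => ‖y‖ ^ (-α)) volume := by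
  rw [locallyIntegrable_iff]
  intro K hK
  obtain ⟨R, hR⟩ := hK.isBounded.subset_closedBall 0
  refine IntegrableOn.mono_set ?_ hR
  set μ := volume.restrict (closedBall (0:V3) R) with hμ
  have hmeas : Measurable fun y : V3 => ‖y‖ ^ (-α) := by fun_prop
  have hnn : (0:V3 → ℝ) ≤ fun y => ‖y‖ ^ (-α) := fun y => rpow_nonneg (norm_nonneg _) _
  have hres : ∀ S : Set V3, μ S ≤ volume (closedBall (0:V3) R) :=
    fun S => le_trans (measure_mono (subset_univ _)) (by rw [Measure.restrict_apply_univ])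
  constructor
  · exact hmeas.aestronglyMeasurable
  · rw [hasFiniteIntegral_iff_ofReal (Eventually.of_forall hnn)]
    rw [lintegral_eq_lintegral_meas_le μ (Eventually.of_forall hnn) hmeas.aemeasurable]
    have hsplit : (∫⁻ t in Ioi (0:ℝ), μ {a | t ≤ ‖a‖ ^ (-α)})
        = (∫⁻ t in Ioc (0:ℝ) 1, μ {a | t ≤ ‖a‖ ^ (-α)})
          + ∫⁻ t in Ioi (1:ℝ), μ {a | t ≤ ‖a‖ ^ (-α)} := by
      rw [← lintegral_union measurableSet_Ioi (Ioc_disjoint_Ioi le_rfl),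
        Ioc_union_Ioi_eq_Ioi zero_le_one]
    rw [hsplit]
    have h1 : (∫⁻ t in Ioc (0:ℝ) 1, μ {a | t ≤ ‖a‖ ^ (-α)}) < ⊤ := by
      calc (∫⁻ t in Ioc (0:ℝ) 1, μ {a | t ≤ ‖a‖ ^ (-α)})
          ≤ ∫⁻ _ in Ioc (0:ℝ) 1, volume (closedBall (0:V3) R) :=
            setLIntegral_mono' measurableSet_Ioc fun t _ => hres _
        _ < ⊤ := by
            rw [setLIntegral_const]
            exact ENNReal.mul_lt_top measure_closedBall_lt_top (by simp)
    have h2 : (∫⁻ t in Ioi (1:ℝ), μ {a | t ≤ ‖a‖ ^ (-α)}) < ⊤ := by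
      have hball : ∀ t : ℝ, 0 < t → μ {a | t ≤ ‖a‖ ^ (-α)}
          ≤ ENNReal.ofReal (t ^ (-(3/α))) * volume (ball (0:V3) 1) := by
        intro t ht
        have hsub : {a : V3 | t ≤ ‖a‖ ^ (-α)} ⊆ closedBall 0 (t ^ (-α⁻¹)) := by
          intro a ha
          simp only [mem_setOf_eq] at ha
          have hna : 0 < ‖a‖ := by
            rcases eq_or_lt_of_le (norm_nonneg a) with h | h
            · exfalso
              rw [← h, zero_rpow (neg_ne_zero.2 hα0.ne')] at ha
              exact absurd (lt_of_lt_of_le ht ha) (lt_irrefl 0)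
            · exact h
          have h1 : (‖a‖ ^ (-α)) ^ (-α⁻¹) ≤ t ^ (-α⁻¹) :=
            antitoneOn_rpow_Ioi_of_exponent_nonpos (neg_nonpos.2 (inv_nonneg.2 hα0.le))
              (mem_Ioi.2 ht) (mem_Ioi.2 (lt_of_lt_of_le ht ha)) ha
          rw [← Real.rpow_mul (norm_nonneg a), neg_mul_neg, mul_inv_cancel₀ hα0.ne',
            Real.rpow_one] at h1
          simpa [mem_closedBall, dist_zero_right] using h1
        calc μ {a : V3 | t ≤ ‖a‖ ^ (-α)} ≤ volume {a : V3 | t ≤ ‖a‖ ^ (-α)} :=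
              Measure.restrict_le_self _
          _ ≤ volume (closedBall (0:V3) (t ^ (-α⁻¹))) := measure_mono hsub
          _ = ENNReal.ofReal ((t ^ (-α⁻¹)) ^ Module.finrank ℝ V3) * volume (ball (0:V3) 1) :=
              Measure.addHaar_closedBall _ _ (by positivity)
          _ = ENNReal.ofReal (t ^ (-(3/α))) * volume (ball (0:V3) 1) := by
              congr 1
              rw [← Real.rpow_natCast (t ^ (-α⁻¹)), ← Real.rpow_mul ht.le]
              norm_num
              ring_nf
      calc (∫⁻ t in Ioi (1:ℝ), μ {a | t ≤ ‖a‖ ^ (-α)})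
          ≤ ∫⁻ t in Ioi (1:ℝ), ENNReal.ofReal (t ^ (-(3/α))) * volume (ball (0:V3) 1) :=
            setLIntegral_mono' measurableSet_Ioi fun t ht => hball t (lt_trans one_pos ht)
        _ = (∫⁻ t in Ioi (1:ℝ), ENNReal.ofReal (t ^ (-(3/α)))) * volume (ball (0:V3) 1) := by
            rw [lintegral_mul_const'' _ ]
            fun_prop
        _ < ⊤ := by
            refine ENNReal.mul_lt_top ?_ measure_ball_lt_top
            have hint : IntegrableOn (fun t : ℝ => t ^ (-(3/α))) (Ioi 1) volume :=
              integrableOn_Ioi_rpow_of_lt (by rw [neg_lt_neg_iff]; exact (one_lt_div hα0).2 hα3)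
                one_pos
            refine lt_of_le_of_lt (lintegral_mono fun t => ?_) hint.hasFiniteIntegral
            exact Real.ofReal_le_enorm _
    exact ENNReal.add_lt_top.2 ⟨h1, h2⟩

lemma inner_gradient_eq (g : V3 → ℝ) (z v : V3) : ⟪v, gradient g z⟫ = fderiv ℝ g z v := by
  rw [real_inner_comm]
  exact InnerProductSpace.toDual_symm_apply

set_option maxHeartbeats 2000000 in
theorem stmt3 (ρ : V3 → ℝ) (hρ : ContDiff ℝ 1 ρ) (hsupp : HasCompactSupport ρ)
    (hpos : ∀ x, 0 ≤ ρ x) (α : ℝ) (hα0 : 0 < α) (hα3 : α < 3) (x : V3) :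
    ⟪x, gradient (fun z => ∫ y, ‖z - y‖ ^ (-α) * ρ y) x⟫
      = (∫ y, ‖x - y‖ ^ (-α) * ⟪y, gradient ρ y⟫)
        + (3 - α) * ∫ y, ‖x - y‖ ^ (-α) * ρ y := by
  have hf_loc : LocallyIntegrable (fun u : V3 => ‖u‖ ^ (-α)) volume := locInt_rpow hα0 hα3
  set f : V3 → ℝ := fun u => ‖u‖ ^ (-α) with hf
  set L : ℝ →L[ℝ] ℝ →L[ℝ] ℝ := ContinuousLinearMap.lsmul ℝ ℝ with hL
  set F : V3 → ℝ := f ⋆[L, volume] ρ with hF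
  have key : ∀ z : V3, (∫ y, ‖z - y‖ ^ (-α) * ρ y) = F z := by
    intro z
    have h := integral_sub_left_eq_self (fun t => f t * ρ (z - t)) volume z
    simp only [sub_sub_cancel] at h
    rw [hF, convolution_def]
    simp only [hL, ContinuousLinearMap.lsmul_apply, smul_eq_mul]
    exact h
  have hFder : HasFDerivAt F ((f ⋆[L.precompR V3, volume] fderiv ℝ ρ) x) x :=
    hsupp.hasFDerivAt_convolution_right L hf_loc hρ x
  set D : V3 →L[ℝ] ℝ := (f ⋆[L.precompR V3, volume] fderiv ℝ ρ) x with hD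
  -- Claim 1 : scaling identity
  have claim1 : ∀ t : ℝ, 0 < t →
      (∫ y, f (x - y) * ρ (t • y)) = t ^ (α - 3) * F (t • x) := by
    intro t ht
    have hchg := MeasureTheory.Measure.integral_comp_smul (volume : Measure V3)
      (fun z => f (x - t⁻¹ • z) * ρ z) t
    simp only [smul_smul, inv_mul_cancel₀ ht.ne', one_smul] at hchg
    have hker : ∀ z : V3, f (x - t⁻¹ • z) = t ^ α * f (t • x - z) := by
      intro z
      have hxz : x - t⁻¹ • z = t⁻¹ • (t • x - z) := by
        rw [smul_sub, smul_smul, inv_mul_cancel₀ ht.ne', one_smul]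
      rw [hf]
      simp only
      rw [hxz, norm_smul, Real.norm_eq_abs, abs_of_pos (inv_pos.2 ht),
        Real.mul_rpow (inv_nonneg.2 ht.le) (norm_nonneg _),
        Real.inv_rpow ht.le, Real.rpow_neg ht.le, inv_inv]
    rw [hchg]
    simp only [hker]
    simp_rw [mul_assoc]
    rw [integral_const_mul]
    have hFtx : (∫ z, f (t • x - z) * ρ z) = F (t • x) := key (t • x)
    rw [hFtx, smul_eq_mul]
    have hfin : Module.finrank ℝ V3 = 3 := by simp
    rw [hfin, abs_of_pos (by positivity : (0:ℝ) < (t ^ 3)⁻¹)]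
    rw [show (t:ℝ) ^ (3:ℕ) = t ^ ((3:ℕ):ℝ) from (Real.rpow_natCast t 3).symm]
    rw [← Real.rpow_neg ht.le, ← mul_assoc, ← Real.rpow_add ht,
      show (-(((3:ℕ)):ℝ) + α) = α - 3 by push_cast; ring]
  -- Claim 2 : differentiation under the integral sign
  have hfnn : ∀ u : V3, 0 ≤ f u := fun u => rpow_nonneg (norm_nonneg _) _
  have hfmeas : Measurable f := by fun_prop
  obtain ⟨R, hR0, hRsupp⟩ := hsupp.isBounded.subset_closedBall_lt 0 0
  obtain ⟨M, hM⟩ := (hsupp.fderiv ℝ).exists_bound_of_continuous (hρ.continuous_fderiv one_ne_zero)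
  have hM0 : 0 ≤ M := le_trans (norm_nonneg _) (hM 0)
  have hInd : Integrable ((closedBall (0:V3) (2*R)).indicator fun y => f (x - y)) volume := by
    have h1 : IntegrableOn f (closedBall x (2*R)) volume :=
      hf_loc.integrableOn_isCompact (isCompact_closedBall x (2*R))
    have h2 : Integrable ((closedBall x (2*R)).indicator f) volume :=
      h1.integrable_indicator measurableSet_closedBall
    have h3 := h2.comp_sub_left x
    refine h3.congr (Eventually.of_forall fun y => ?_)
    simp only
    have hdist : dist (x - y) x = ‖y‖ := by
      rw [dist_eq_norm]
      simp
    by_cases hy : y ∈ closedBall (0:V3) (2*R)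
    · have hy2 := hy
      simp only [mem_closedBall, dist_zero_right] at hy2
      rw [indicator_of_mem (by rw [mem_closedBall, hdist]; exact hy2), indicator_of_mem hy]
    · have hy2 := hy
      simp only [mem_closedBall, dist_zero_right, not_le] at hy2
      rw [indicator_of_notMem (by rw [mem_closedBall, hdist]; exact not_le.2 hy2),
        indicator_of_notMem hy]
  have hdom := hasDerivAt_integral_of_dominated_loc_of_deriv_le
    (F := fun (t : ℝ) (y : V3) => f (x - y) * ρ (t • y))
    (F' := fun (t : ℝ) (y : V3) => f (x - y) * fderiv ℝ ρ (t • y) y)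
    (x₀ := (1:ℝ)) (s := ball (1:ℝ) 2⁻¹) (μ := (volume : Measure V3))
    (bound := (closedBall (0:V3) (2*R)).indicator fun y => f (x - y) * (M * (2*R)))
    (ball_mem_nhds _ (by norm_num))
    ?_ ?_ ?_ ?_ ?_ ?_
  rotate_left
  · refine Eventually.of_forall fun t => ?_
    have hc : Continuous fun y : V3 => ρ (t • y) := hρ.continuous.comp (continuous_const_smul t)
    exact ((hfmeas.comp (measurable_const.sub measurable_id)).mul
      hc.measurable).aestronglyMeasurable
  · have hconv := hsupp.convolutionExists_right (ContinuousLinearMap.lsmul ℝ ℝ)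
      hf_loc hρ.continuous x
    have hpre : Integrable (fun t : V3 => f t * ρ (x - t)) volume := by
      simpa [ContinuousLinearMap.lsmul_apply, smul_eq_mul] using hconv.integrable
    have h2 := hpre.comp_sub_left x
    simp only [sub_sub_cancel] at h2
    refine h2.congr (Eventually.of_forall fun y => ?_)
    simp [one_smul]
  · have hc : Continuous fun y : V3 => fderiv ℝ ρ ((1:ℝ) • y) y :=
      ((hρ.continuous_fderiv one_ne_zero).comp (continuous_const_smul (1:ℝ))).clm_apply continuous_id
    exact ((hfmeas.comp (measurable_const.sub measurable_id)).mul
      hc.measurable).aestronglyMeasurable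
  · refine Eventually.of_forall fun y => fun t ht => ?_
    by_cases hy : y ∈ closedBall (0:V3) (2*R)
    · rw [indicator_of_mem hy]
      simp only [mem_closedBall, dist_zero_right] at hy
      rw [norm_mul, Real.norm_eq_abs (f (x - y)), abs_of_nonneg (hfnn _)]
      refine mul_le_mul_of_nonneg_left ?_ (hfnn _)
      calc ‖fderiv ℝ ρ (t • y) y‖ ≤ ‖fderiv ℝ ρ (t • y)‖ * ‖y‖ :=
            (fderiv ℝ ρ (t • y)).le_opNorm y
        _ ≤ M * (2*R) := mul_le_mul (hM _) hy (norm_nonneg _) hM0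
    · rw [indicator_of_notMem hy]
      simp only [mem_closedBall, dist_zero_right, not_le] at hy
      have hts : t • y ∉ tsupport ρ := by
        intro hmem
        have hb := hRsupp hmem
        simp only [mem_closedBall, dist_zero_right] at hb
        rw [norm_smul, Real.norm_eq_abs] at hb
        have ht' : 2⁻¹ < |t| := by
          rw [mem_ball, Real.dist_eq] at ht
          cases abs_sub_lt_iff.1 ht with
          | intro h1 h2 => rw [abs_of_pos (by linarith)]; linarith
        nlinarith [abs_nonneg t, norm_nonneg y]
      have hz : fderiv ℝ ρ (t • y) = 0 :=
        image_eq_zero_of_notMem_tsupport (fun hmem => hts (tsupport_fderiv_subset ℝ hmem))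
      simp [hz]
  · have heqb : ((closedBall (0:V3) (2*R)).indicator fun y => f (x - y) * (M * (2*R)))
        = fun y => ((closedBall (0:V3) (2*R)).indicator fun y => f (x - y)) y * (M * (2*R)) := by
      ext y
      by_cases hy : y ∈ closedBall (0:V3) (2*R) <;>
        simp [hy, indicator_of_mem, indicator_of_notMem]
    rw [heqb]
    exact hInd.mul_const _
  · refine Eventually.of_forall fun y => fun t ht => ?_
    have hsm : HasDerivAt (fun s : ℝ => s • y) y t := by
      simpa using (hasDerivAt_id t).smul_const y
    have hd : HasDerivAt (fun s : ℝ => ρ (s • y)) (fderiv ℝ ρ (t • y) y) t :=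
      ((hρ.differentiable one_ne_zero).differentiableAt.hasFDerivAt).comp_hasDerivAt t hsm
    exact hd.const_mul _
  obtain ⟨-, hderiv⟩ := hdom
  have claim2 : HasDerivAt (fun t : ℝ => ∫ y, f (x - y) * ρ (t • y))
      (∫ y, f (x - y) * fderiv ℝ ρ y y) 1 := by
    simp only [one_smul] at hderiv
    exact hderiv
  -- Claim 3 : derivative of the scaled expression
  have hsm1 : HasDerivAt (fun t : ℝ => t • x) x 1 := by
    simpa using (hasDerivAt_id (1:ℝ)).smul_const x
  have hFat : HasFDerivAt F D ((1:ℝ) • x) := by rwa [one_smul]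
  have h3a : HasDerivAt (fun t : ℝ => F (t • x)) (D x) 1 := by
    have := hFat.comp_hasDerivAt 1 hsm1
    exact this
  have h3b : HasDerivAt (fun t : ℝ => t ^ (α - 3)) (α - 3) 1 := by
    have := Real.hasDerivAt_rpow_const (x := (1:ℝ)) (p := α - 3) (Or.inl one_ne_zero)
    simpa using this
  have h3 : HasDerivAt (fun t : ℝ => t ^ (α - 3) * F (t • x))
      ((α - 3) * F x + D x) 1 := by
    have := h3b.mul h3a
    simp only [one_smul, Real.one_rpow, one_mul] at this
    exact this
  have heq : (fun t : ℝ => ∫ y, f (x - y) * ρ (t • y))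
      =ᶠ[nhds (1:ℝ)] fun t => t ^ (α - 3) * F (t • x) := by
    filter_upwards [Ioi_mem_nhds one_pos] with t ht using claim1 t ht
  have h4 : HasDerivAt (fun t : ℝ => ∫ y, f (x - y) * ρ (t • y))
      ((α - 3) * F x + D x) 1 := h3.congr_of_eventuallyEq heq
  have huniq : (∫ y, f (x - y) * fderiv ℝ ρ y y) = (α - 3) * F x + D x :=
    claim2.unique h4
  -- Conclusion
  have hgradF : ⟪x, gradient (fun z => ∫ y, ‖z - y‖ ^ (-α) * ρ y) x⟫ = D x := by
    rw [inner_gradient_eq, show (fun z => ∫ y, ‖z - y‖ ^ (-α) * ρ y) = F from funext key,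
      hFder.fderiv]
  have hinner : (∫ y, ‖x - y‖ ^ (-α) * ⟪y, gradient ρ y⟫)
      = ∫ y, f (x - y) * fderiv ℝ ρ y y := by
    congr 1
    ext y
    rw [inner_gradient_eq]
  rw [hgradF, hinner, huniq, key x]
  ring
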